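/- arXiv:2310.08229 — 3 statements merged into one kernel-verified Lean document; each statement's English description precedes it below -/
import Mathlib

section
/- Let S be a semigroup and let B ⊆ S be a subset such that ρ_B := Δ_S ∪ (B × B) is a congruence of S (here Δ_S is the diagonal relation). Then ρ_B is a modular element of the congruence lattice Cong(S); that is, σ₁ ∨ (ρ_B ∧ σ₂) = (σ₁ ∨ ρ_B) ∧ σ₂ for all congruences σ₁ ⊆ σ₂ of S. -/
/-- Let `S` be a semigroup and `B ⊆ S` a subset such that `ρ_B := Δ_S ∪ (B × B)` is a
congruence of `S`.  Then `ρ_B` is a modular element of the congruence lattice of `S`: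
`σ₁ ⊔ (ρ_B ⊓ σ₂) = (σ₁ ⊔ ρ_B) ⊓ σ₂` for all congruences `σ₁ ≤ σ₂`. -/
theorem reesCongruence_modular {S : Type*} [Semigroup S] (B : Set S) (ρB : Con S)
    (hρB : ∀ x y : S, ρB x y ↔ x = y ∨ (x ∈ B ∧ y ∈ B)) :
    ∀ σ₁ σ₂ : Con S, σ₁ ≤ σ₂ → σ₁ ⊔ (ρB ⊓ σ₂) = (σ₁ ⊔ ρB) ⊓ σ₂ := by
  intro σ₁ σ₂ h
  apply le_antisymm
  · exact sup_le (le_inf le_sup_left h)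
      (le_inf (le_trans inf_le_left le_sup_right) inf_le_right)
  -- auxiliary congruence R = σ₁ ∘ ρB ∘ σ₁
  · set R : Con S :=
      { r := fun x y => ∃ u v, σ₁ x u ∧ ρB u v ∧ σ₁ v y
        iseqv := by
          constructor
          · intro x; exact ⟨x, x, σ₁.refl x, ρB.refl x, σ₁.refl x⟩
          · rintro x y ⟨u, v, h1, h2, h3⟩
            exact ⟨v, u, σ₁.symm h3, ρB.symm h2, σ₁.symm h1⟩
          · rintro x y z ⟨u, v, h1, h2, h3⟩ ⟨u', v', h1', h2', h3'⟩
            rcases (hρB u v).mp h2 with rfl | ⟨hu, hv⟩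
            · rcases (hρB u' v').mp h2' with rfl | ⟨hu', hv'⟩
              · exact ⟨u, u, h1, ρB.refl u,
                  σ₁.trans h3 (σ₁.trans h1' h3')⟩
              · exact ⟨u', v', σ₁.trans (σ₁.trans h1 h3) h1', h2', h3'⟩
            · rcases (hρB u' v').mp h2' with rfl | ⟨hu', hv'⟩
              · exact ⟨u, v, h1, h2, σ₁.trans h3 (σ₁.trans h1' h3')⟩
              · exact ⟨u, v', h1, (hρB u v').mpr (Or.inr ⟨hu, hv'⟩), h3'⟩
        mul' := by
          rintro a b c d ⟨u, v, h1, h2, h3⟩ ⟨u', v', h1', h2', h3'⟩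
          exact ⟨u * u', v * v', σ₁.mul h1 h1', ρB.mul h2 h2', σ₁.mul h3 h3'⟩ } with hR
    have hle : σ₁ ⊔ ρB ≤ R := by
      apply sup_le
      · intro x y hxy
        exact ⟨y, y, hxy, ρB.refl y, σ₁.refl y⟩
      · intro x y hxy
        exact ⟨x, y, σ₁.refl x, hxy, σ₁.refl y⟩
    rintro x y ⟨hxy1, hxy2⟩
    obtain ⟨u, v, h1, h2, h3⟩ := hle hxy1
    have hs1 : (σ₁ ⊔ (ρB ⊓ σ₂)) x u := (le_sup_left : σ₁ ≤ σ₁ ⊔ (ρB ⊓ σ₂)) h1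
    rcases (hρB u v).mp h2 with rfl | ⟨hu, hv⟩
    · exact (le_sup_left : σ₁ ≤ σ₁ ⊔ (ρB ⊓ σ₂)) (σ₁.trans h1 h3)
    · have huv2 : σ₂ u v := σ₂.trans (σ₂.symm (h h1)) (σ₂.trans hxy2 (σ₂.symm (h h3)))
      have hmid : (σ₁ ⊔ (ρB ⊓ σ₂)) u v := (le_sup_right : ρB ⊓ σ₂ ≤ σ₁ ⊔ (ρB ⊓ σ₂)) (Con.inf_iff_and.mpr ⟨h2, huv2⟩)
      exact (σ₁ ⊔ (ρB ⊓ σ₂)).trans hs1 ((σ₁ ⊔ (ρB ⊓ σ₂)).trans hmid ((le_sup_left : σ₁ ≤ σ₁ ⊔ (ρB ⊓ σ₂)) h3))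
end

section
/- Let S be a semigroup and B a subsemigroup of S with the diagonal congruence extension property: for every congruence σ of B, the relation σ ∪ Δ_S is a congruence of S. Then the map σ ↦ σ ∪ Δ_S is a lattice isomorphism from Cong(B) onto the interval [Δ_S, ρ_B] of Cong(S), where ρ_B = Δ_S ∪ (B × B); consequently Ht(Cong(S)) = Ht(Cong(B)) + Ht(Cong(S/ρ_B)) − 1, where S/ρ_B is the quotient semigroup. -/
/-- The height of a partially ordered type: the supremum of the cardinalities
(= lengths) of chains in it. -/
noncomputable def orderHeight (α : Type*) [Preorder α] : ℕ∞ :=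
  Set.chainHeight (Set.univ : Set α) (· < ·)

private theorem enat_add_one_sub_one (x : ℕ∞) : x + 1 - 1 = x := by
  cases x using ENat.recTopCoe with
  | top => rfl
  | coe n =>
    have h1 : ((n : ℕ∞) + 1 : ℕ∞) = ((n + 1 : ℕ) : ℕ∞) := by push_cast; ring
    have h2 : (1 : ℕ∞) = ((1 : ℕ) : ℕ∞) := rfl
    rw [h1, h2, ← ENat.coe_sub, Nat.add_sub_cancel]

section ConJoin

variable {S : Type*} [Semigroup S]

/-- The join of two congruences, described as a transitive closure. -/
private def conJoin (c d : Con S) : Con S where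
  r := Relation.TransGen (fun a b => c a b ∨ d a b)
  iseqv := by
    refine ⟨fun x => Relation.TransGen.single (Or.inl (c.refl x)), ?_, fun h1 h2 => h1.trans h2⟩
    · intro x y h
      induction h with
      | single h => exact Relation.TransGen.single (h.imp c.symm d.symm)
      | tail _ h ih => exact Relation.TransGen.head (h.imp c.symm d.symm) ih
  mul' := by
    have key : ∀ {x y : S}, Relation.TransGen (fun a b => c a b ∨ d a b) x y →
        ∀ z : S, Relation.TransGen (fun a b => c a b ∨ d a b) (x * z) (y * z) ∧
          Relation.TransGen (fun a b => c a b ∨ d a b) (z * x) (z * y) := by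
      intro x y h z
      constructor
      · exact Relation.TransGen.lift (p := fun a b => c a b ∨ d a b) (· * z)
          (fun a b hab => Or.imp (fun h => c.mul h (c.refl z)) (fun h => d.mul h (d.refl z)) hab) _ _ h
      · exact Relation.TransGen.lift (p := fun a b => c a b ∨ d a b) (z * ·)
          (fun a b hab => Or.imp (fun h => c.mul (c.refl z) h) (fun h => d.mul (d.refl z) h) hab) _ _ h
    intro w x y z h1 h2
    exact ((key h1 y).1).trans ((key h2 x).2)

private theorem conJoin_ge (c d : Con S) : c ⊔ d ≤ conJoin c d := by
  refine sup_le ?_ ?_ <;> intro x y h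
  · exact Relation.TransGen.single (Or.inl h)
  · exact Relation.TransGen.single (Or.inr h)

/-- Key lemma: around `ρB` the map `c ↦ (c ⊓ ρB, c ⊔ ρB)` is injective on comparable pairs. -/
private theorem key_lemma (B : Subsemigroup S) (ρB : Con S)
    (hρB : ∀ x y : S, ρB x y ↔ x = y ∨ (x ∈ B ∧ y ∈ B))
    {c d : Con S} (hcd : c ≤ d) (h1 : d ⊓ ρB ≤ c) (h2 : d ≤ c ⊔ ρB) : d ≤ c := by
  intro x y hxy
  have hj : conJoin c ρB x y := conJoin_ge c ρB (h2 hxy)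
  have hP : c x y ∨ ((∃ x', c x x' ∧ x' ∈ B) ∧ (∃ y', c y y' ∧ y' ∈ B)) := by
    clear hxy
    induction hj with
    | single h =>
      rcases h with h | h
      · exact Or.inl h
      · rcases (hρB _ _).1 h with rfl | ⟨hx, hy⟩
        · exact Or.inl (c.refl _)
        · exact Or.inr ⟨⟨_, c.refl _, hx⟩, ⟨_, c.refl _, hy⟩⟩
    | @tail b y _ h ih =>
      rcases h with h | h
      · rcases ih with h' | ⟨hx, ⟨b', hbb', hb'⟩⟩
        · exact Or.inl (c.trans h' h)
        · exact Or.inr ⟨hx, ⟨b', c.trans (c.symm h) hbb', hb'⟩⟩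
      · rcases (hρB _ _).1 h with rfl | ⟨hb, hy⟩
        · exact ih
        · rcases ih with h' | ⟨hx, _⟩
          · exact Or.inr ⟨⟨b, h', hb⟩, ⟨y, c.refl _, hy⟩⟩
          · exact Or.inr ⟨hx, ⟨y, c.refl _, hy⟩⟩
  rcases hP with h | ⟨⟨x', hxx', hx'⟩, ⟨y', hyy', hy'⟩⟩
  · exact h
  have hd : d x' y' := d.trans (d.symm (hcd hxx')) (d.trans hxy (hcd hyy'))
  have : c x' y' := h1 ⟨hd, (hρB _ _).2 (Or.inr ⟨hx', hy'⟩)⟩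
  exact c.trans (c.trans hxx' this) (c.symm hyy')

end ConJoin

private theorem split_chain {α : Type*} [Lattice α] (a : α)
    (hkey : ∀ x y : α, x < y → x ⊓ a = y ⊓ a → x ⊔ a = y ⊔ a → False) :
    ∀ l : List α, l.Chain' (· < ·) → ∀ x, l.head? = some x →
      ∃ l1 l2 : List α, l1.Chain' (· < ·) ∧ l2.Chain' (· < ·) ∧
        (∀ z ∈ l1, z ≤ a) ∧ (∀ z ∈ l2, a ≤ z) ∧
        l1.head? = some (x ⊓ a) ∧ l2.head? = some (x ⊔ a) ∧
        l.length + 1 ≤ l1.length + l2.length := by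
  intro l
  induction l with
  | nil => intro _ x hx; simp at hx
  | cons x' t ih =>
    intro hchain x hx
    simp only [List.head?_cons, Option.some.injEq] at hx
    subst hx
    match t, hchain with
    | [], _ =>
      exact ⟨[x' ⊓ a], [x' ⊔ a], List.isChain_singleton _, List.isChain_singleton _,
        by simp, by simp, rfl, rfl, by simp⟩
    | y :: t', hchain =>
      rw [List.Chain', List.isChain_cons_cons] at hchain
      obtain ⟨hxy, hchain'⟩ := hchain
      obtain ⟨l1, l2, hc1, hc2, hb1, hb2, hh1, hh2, hlen⟩ := ih hchain' y rfl
      have hle1 : x' ⊓ a ≤ y ⊓ a := inf_le_inf_right a hxy.le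
      have hle2 : x' ⊔ a ≤ y ⊔ a := sup_le_sup_right hxy.le a
      have hcons1 : x' ⊓ a < y ⊓ a → ((x' ⊓ a) :: l1).Chain' (· < ·) := fun h =>
        List.isChain_cons.mpr ⟨fun z hz => by
          rw [hh1, Option.mem_def, Option.some.injEq] at hz; exact hz ▸ h, hc1⟩
      have hcons2 : x' ⊔ a < y ⊔ a → ((x' ⊔ a) :: l2).Chain' (· < ·) := fun h =>
        List.isChain_cons.mpr ⟨fun z hz => by
          rw [hh2, Option.mem_def, Option.some.injEq] at hz; exact hz ▸ h, hc2⟩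
      have hmem1 : ∀ z ∈ (x' ⊓ a) :: l1, z ≤ a := by
        intro z hz
        rcases List.mem_cons.mp hz with rfl | hz
        · exact inf_le_right
        · exact hb1 z hz
      have hmem2 : ∀ z ∈ (x' ⊔ a) :: l2, a ≤ z := by
        intro z hz
        rcases List.mem_cons.mp hz with rfl | hz
        · exact le_sup_right
        · exact hb2 z hz
      rcases hle1.lt_or_eq with h1 | h1
      · rcases hle2.lt_or_eq with h2 | h2
        · refine ⟨(x' ⊓ a) :: l1, (x' ⊔ a) :: l2, hcons1 h1, hcons2 h2, hmem1, hmem2,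
            rfl, rfl, ?_⟩
          simp only [List.length_cons] at hlen ⊢
          omega
        · refine ⟨(x' ⊓ a) :: l1, l2, hcons1 h1, hc2, hmem1, hb2, rfl, by rw [hh2, h2], ?_⟩
          simp only [List.length_cons] at hlen ⊢
          omega
      · rcases hle2.lt_or_eq with h2 | h2
        · refine ⟨l1, (x' ⊔ a) :: l2, hc1, hcons2 h2, hb1, hmem2, by rw [hh1, h1], rfl, ?_⟩
          simp only [List.length_cons] at hlen ⊢
          omega
        · exact absurd (hkey x' y hxy h1 h2) (by simp)

private theorem list_length_le_chainHeight {α : Type*} [Preorder α] (s : Set α) (l : List α)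
    (hl : l.Chain' (· < ·)) (hs : ∀ z ∈ l, z ∈ s) :
    (l.length : ℕ∞) ≤ s.chainHeight (· < ·) := by
  classical
  have hp : l.Pairwise (· < ·) := List.isChain_iff_pairwise.mp hl
  have hnd : l.Nodup := hp.imp (fun h => h.ne)
  have hc : ∀ m : List α, m.Pairwise (· < ·) → IsChain (· < ·) {x | x ∈ m} := by
    intro m hm
    induction m with
    | nil => simp [IsChain]
    | cons b t ih =>
      rw [List.pairwise_cons] at hm
      have : {x | x ∈ b :: t} = insert b {x | x ∈ t} := by ext; simp
      rw [this]
      exact (ih hm.2).insert fun y hy _ => Or.inl (hm.1 y hy)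
  have he : ({x | x ∈ l} : Set α) = ↑l.toFinset := by ext; simp
  have := Set.encard_le_chainHeight_of_isChain s {x | x ∈ l} (fun z hz => hs z hz) (hc l hp)
  rwa [he, Set.encard_coe_eq_coe_finsetCard, List.toFinset_card_of_nodup hnd] at this

private theorem list_of_chain {α : Type*} [Preorder α] :
    ∀ (n : ℕ) (t : Set α), t.encard = n → IsChain (· < ·) t →
      ∃ l : List α, l.Chain' (· < ·) ∧ (∀ z ∈ l, z ∈ t) ∧ l.length = n := by
  intro n
  induction n with
  | zero => intro t _ _; exact ⟨[], List.isChain_nil, by simp, rfl⟩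
  | succ n ih =>
    intro t ht hc
    have hfin : t.Finite := Set.finite_of_encard_eq_coe ht
    have hne : t.Nonempty := by
      rw [Set.nonempty_iff_ne_empty]; rintro rfl; rw [Set.encard_empty] at ht; exact absurd ht.symm (by positivity)
    obtain ⟨m, hm⟩ := hfin.exists_minimal hne
    have ht' : (t \ {m}).encard = n := by
      rw [Set.encard_diff_singleton_of_mem hm.1, ht]; push_cast; exact enat_add_one_sub_one _
    obtain ⟨l, hl, hlt, hlen⟩ := ih (t \ {m}) ht' (hc.mono Set.diff_subset)
    refine ⟨m :: l, List.isChain_cons.mpr ⟨fun y hy => ?_, hl⟩, ?_, by simp [hlen]⟩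
    · have hy' := hlt y (List.mem_of_mem_head? hy)
      have hym : m ≠ y := fun h => hy'.2 (h ▸ rfl)
      rcases hc hm.1 hy'.1 hym with h | h
      · exact h
      · exact absurd (hm.2 hy'.1 h.le) (not_le_of_gt h)
    · intro z hz
      rcases List.mem_cons.mp hz with rfl | hz
      · exact hm.1
      · exact (hlt z hz).1

private theorem height_split {α : Type*} [Lattice α] (a : α)
    (hkey : ∀ x y : α, x < y → x ⊓ a = y ⊓ a → x ⊔ a = y ⊔ a → False) :
    Set.chainHeight (Set.univ : Set α) (· < ·) + 1 =
      Set.chainHeight (Set.Iic a) (· < ·) + Set.chainHeight (Set.Ici a) (· < ·) := by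
  apply le_antisymm
  · rw [← ENat.forall_natCast_le_iff_le]
    intro n hn
    rcases n with _ | n
    · simp
    · have hn' : (n : ℕ∞) ≤ Set.chainHeight (Set.univ : Set α) (· < ·) := by
        push_cast at hn; exact (ENat.add_le_add_iff_right ENat.one_ne_top).mp hn
      obtain ⟨t, -, ht, hc⟩ := Set.exists_isChain_of_le_chainHeight n hn'
      obtain ⟨l, hl, -, hlen⟩ := list_of_chain n t ht hc
      match l, hl, hlen with
      | [], _, hlen =>
        simp only [List.length_nil] at hlen
        subst hlen
        calc ((0 + 1 : ℕ) : ℕ∞) = 1 := by norm_num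
          _ ≤ Set.chainHeight (Set.Iic a) (· < ·) :=
            (Set.one_le_chainHeight_iff _ _).mpr ⟨a, le_refl a⟩
          _ ≤ _ := le_self_add
      | x :: t', hl, hlen =>
        obtain ⟨l1, l2, hc1, hc2, hb1, hb2, -, -, hlen'⟩ := split_chain a hkey (x :: t') hl x rfl
        calc ((n + 1 : ℕ) : ℕ∞) ≤ ((l1.length + l2.length : ℕ) : ℕ∞) := by
              rw [← hlen]; exact_mod_cast hlen'
          _ = (l1.length : ℕ∞) + l2.length := by push_cast; rfl
          _ ≤ _ := add_le_add (list_length_le_chainHeight _ l1 hc1 hb1)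
              (list_length_le_chainHeight _ l2 hc2 hb2)
  · rw [Set.chainHeight_eq_iSup (Set.Iic a), Set.chainHeight_eq_iSup (Set.Ici a)]
    haveI : ∀ s : Set α, Nonempty {t // t ⊆ s ∧ IsChain (· < ·) t} :=
      fun s => ⟨⟨∅, by simp⟩⟩
    refine ENat.iSup_add_iSup_le ?_
    rintro ⟨t1, h1, c1⟩ ⟨t2, h2, c2⟩
    have hu : IsChain (· < ·) (t1 ∪ t2) := by
      intro x hx y hy hne
      rcases hx with hx | hx <;> rcases hy with hy | hy
      · exact c1 hx hy hne
      · exact Or.inl (lt_of_le_of_ne (le_trans (h1 hx) (h2 hy)) hne)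
      · exact Or.inr (lt_of_le_of_ne (le_trans (h1 hy) (h2 hx)) (Ne.symm hne))
      · exact c2 hx hy hne
    have hi : (t1 ∩ t2).encard ≤ 1 := by
      calc (t1 ∩ t2).encard ≤ ({a} : Set α).encard :=
            Set.encard_le_encard (fun z hz => le_antisymm (h1 hz.1) (h2 hz.2))
        _ = 1 := Set.encard_singleton a
    show t1.encard + t2.encard ≤ _
    rw [← Set.encard_union_add_encard_inter]
    exact add_le_add (Set.encard_le_chainHeight_of_isChain _ _ (Set.subset_univ _) hu) hi

private theorem orderHeight_eq_chainHeight {α β : Type*} [Preorder α] [Preorder β]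
    (s : Set β) (f : α → β) (hf : ∀ {x y}, x < y ↔ f x < f y)
    (hrange : f '' Set.univ = s) : orderHeight α = s.chainHeight (· < ·) := by
  unfold orderHeight
  subst hrange
  refine le_antisymm ?_ ?_ <;> rw [← ENat.forall_natCast_le_iff_le] <;> intro n hn
  · obtain ⟨t, -, ht, hc⟩ := Set.exists_isChain_of_le_chainHeight n hn
    have hinj : Set.InjOn f t := by
      intro x hx y hy hxy
      by_contra hne
      rcases hc hx hy hne with h | h
      · exact (hf.mp h).ne hxy
      · exact (hf.mp h).ne hxy.symm
    rw [← ht, ← hinj.encard_image]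
    refine Set.encard_le_chainHeight_of_isChain _ _ (Set.image_mono (Set.subset_univ _)) ?_
    rintro _ ⟨x, hx, rfl⟩ _ ⟨y, hy, rfl⟩ hne
    rcases hc hx hy (fun h => hne (h ▸ rfl)) with h | h
    · exact Or.inl (hf.mp h)
    · exact Or.inr (hf.mp h)
  · obtain ⟨t, hts, ht, hc⟩ := Set.exists_isChain_of_le_chainHeight n hn
    obtain ⟨t', -, hbij⟩ := Set.SurjOn.exists_bijOn_subset (f := f) (s := Set.univ) hts
    rw [← ht, ← hbij.image_eq, hbij.injOn.encard_image]
    refine Set.encard_le_chainHeight_of_isChain _ _ (Set.subset_univ _) ?_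
    intro x hx y hy hne
    have hne' : f x ≠ f y := fun h => hne (hbij.injOn hx hy h)
    rcases hc (hbij.mapsTo hx) (hbij.mapsTo hy) hne' with h | h
    · exact Or.inl (hf.mpr h)
    · exact Or.inr (hf.mpr h)

/-- Let `S` be a semigroup and `B` a subsemigroup with the diagonal congruence extension
property: for every congruence `σ` of `B`, the relation `σ ∪ Δ_S` is a congruence of `S`.
Then `σ ↦ σ ∪ Δ_S` is a lattice isomorphism from `Cong(B)` onto the interval `[Δ_S, ρ_B]`
of `Cong(S)`, where `ρ_B = Δ_S ∪ (B × B)`; consequently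
`Ht(Cong(S)) = Ht(Cong(B)) + Ht(Cong(S/ρ_B)) − 1`. -/
theorem deltaCEP_interval_iso_and_height {S : Type*} [Semigroup S] (B : Subsemigroup S)
    (hCEP : ∀ σ : Con B, ∃ c : Con S, ∀ x y : S,
        c x y ↔ x = y ∨ ∃ hx : x ∈ B, ∃ hy : y ∈ B, σ ⟨x, hx⟩ ⟨y, hy⟩)
    (ρB : Con S) (hρB : ∀ x y : S, ρB x y ↔ x = y ∨ (x ∈ B ∧ y ∈ B)) :
    (∃ e : Con B ≃o ↥(Set.Icc (⊥ : Con S) ρB),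
        ∀ (σ : Con B) (x y : S),
          (e σ : Con S) x y ↔ x = y ∨ ∃ hx : x ∈ B, ∃ hy : y ∈ B, σ ⟨x, hx⟩ ⟨y, hy⟩) ∧
    orderHeight (Con S) = orderHeight (Con B) + orderHeight (Con ρB.Quotient) - 1 := by
  classical
  -- the isomorphism
  let e : Con B ≃o ↥(Set.Icc (⊥ : Con S) ρB) :=
    { toFun := fun σ => ⟨(hCEP σ).choose, bot_le, by
        intro x y h
        rcases ((hCEP σ).choose_spec x y).1 h with rfl | ⟨hx, hy, _⟩
        · exact ρB.refl x
        · exact (hρB x y).2 (Or.inr ⟨hx, hy⟩)⟩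
      invFun := fun c => Con.comap (fun b : B => (b : S)) (fun _ _ => rfl) c.1
      left_inv := fun σ => by
        refine Con.ext fun x y => ?_
        rw [Con.comap_rel]
        rw [(hCEP σ).choose_spec x y]
        constructor
        · rintro (h | ⟨hx, hy, h⟩)
          · rw [Subtype.ext h]; exact σ.refl _
          · convert h
        · intro h
          exact Or.inr ⟨x.2, y.2, h⟩
      right_inv := by
        rintro ⟨c, -, hc⟩
        refine Subtype.ext (Con.ext fun x y => ?_)
        rw [(hCEP _).choose_spec x y]
        constructor
        · rintro (rfl | ⟨hx, hy, h⟩)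
          · exact c.refl x
          · exact h
        · intro h
          rcases (hρB x y).1 (hc h) with rfl | ⟨hx, hy⟩
          · exact Or.inl rfl
          · exact Or.inr ⟨hx, hy, h⟩
      map_rel_iff' := by
        intro σ τ
        constructor
        · intro h x y hxy
          have h1 : (hCEP σ).choose (x : S) (y : S) :=
            ((hCEP σ).choose_spec x y).2 (Or.inr ⟨x.2, y.2, hxy⟩)
          rcases ((hCEP τ).choose_spec x y).1 (h h1) with h' | ⟨hx, hy, h'⟩
          · rw [Subtype.ext h']; exact τ.refl _
          · convert h'
        · intro h x y hxy
          have hxy' : (hCEP σ).choose x y := hxy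
          show (hCEP τ).choose x y
          rw [(hCEP σ).choose_spec x y] at hxy'
          rw [(hCEP τ).choose_spec x y]
          exact hxy'.imp id (fun ⟨hx, hy, h'⟩ => ⟨hx, hy, h h'⟩) }
  have he : ∀ (σ : Con B) (x y : S),
      (e σ : Con S) x y ↔ x = y ∨ ∃ hx : x ∈ B, ∃ hy : y ∈ B, σ ⟨x, hx⟩ ⟨y, hy⟩ :=
    fun σ => (hCEP σ).choose_spec
  refine ⟨⟨e, he⟩, ?_⟩
  -- the key property of ρB
  have hkey : ∀ x y : Con S, x < y → x ⊓ ρB = y ⊓ ρB → x ⊔ ρB = y ⊔ ρB → False := by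
    intro x y hxy hinf hsup
    have : y ≤ x := by
      refine key_lemma B ρB hρB hxy.le ?_ ?_
      · rw [← hinf]; exact inf_le_left
      · exact le_sup_left.trans hsup.symm.le
    exact not_le_of_gt hxy this
  -- height of Con B equals the chain height of Iic ρB
  have hB : orderHeight (Con B) = Set.chainHeight (Set.Iic ρB) (· < ·) := by
    refine orderHeight_eq_chainHeight _ (fun σ => ((e σ : ↥(Set.Icc (⊥ : Con S) ρB)) : Con S))
      (fun {x y} => ?_) ?_
    · rw [← e.lt_iff_lt, Subtype.coe_lt_coe]
    · rw [Set.image_univ]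
      ext c
      simp only [Set.mem_range, Set.mem_Iic]
      constructor
      · rintro ⟨σ, rfl⟩
        exact (e σ).2.2
      · intro hc
        exact ⟨e.symm ⟨c, bot_le, hc⟩, by rw [OrderIso.apply_symm_apply]⟩
  -- height of Con (S/ρB) equals the chain height of Ici ρB
  have hQ : orderHeight (Con ρB.Quotient) = Set.chainHeight (Set.Ici ρB) (· < ·) := by
    refine orderHeight_eq_chainHeight _
      (fun d => ((ρB.correspondence.symm d : {d // ρB ≤ d}) : Con S)) (fun {x y} => ?_) ?_
    · rw [← ρB.correspondence.symm.lt_iff_lt, Subtype.coe_lt_coe]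
    · rw [Set.image_univ]
      ext c
      simp only [Set.mem_range, Set.mem_Ici]
      constructor
      · rintro ⟨d, rfl⟩
        exact (ρB.correspondence.symm d).2
      · intro hc
        exact ⟨ρB.correspondence ⟨c, hc⟩, by rw [OrderIso.symm_apply_apply]⟩
  have hmain : orderHeight (Con S) + 1 =
      orderHeight (Con B) + orderHeight (Con ρB.Quotient) := by
    rw [hB, hQ]
    exact height_split ρB hkey
  rw [← hmain, enat_add_one_sub_one]
end

section
/- If L_1 and L_2 are L-classes of a semigroup S lying in the same D-class, then the principal factor left S-acts ᔆL̄_1 and ᔆL̄_2 are isomorphic: there is a bijection f : L_1 ∪ {0} → L_2 ∪ {0} with f(0) = 0 and f(s·x) = s·f(x) for all s ∈ S and all x. -/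
open scoped Classical

/-- Green's preorder `≤_L`: `x ≤_L y` iff `x = y` or `x = a y` for some `a`. -/
def leL {S : Type*} [Mul S] (x y : S) : Prop := x = y ∨ ∃ a : S, x = a * y

/-- Green's relation `L`. -/
def lrel {S : Type*} [Mul S] (x y : S) : Prop := leL x y ∧ leL y x

/-- Green's preorder `≤_R`: `x ≤_R y` iff `x = y` or `x = y a` for some `a`. -/
def leR {S : Type*} [Mul S] (x y : S) : Prop := x = y ∨ ∃ a : S, x = y * a

/-- Green's relation `R`. -/
def rrel {S : Type*} [Mul S] (x y : S) : Prop := leR x y ∧ leR y x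

/-- Green's relation `D = L ∘ R`. -/
def drel {S : Type*} [Mul S] (x y : S) : Prop := ∃ z : S, lrel x z ∧ rrel z y

/-- The principal factor act on `L ∪ {0}` (with `0 = none`). -/
noncomputable def pfAct {M A : Type*} (act : M → A → A) (L : Set A) (m : M) :
    Option ↥L → Option ↥L
  | none => none
  | some x => if h : act m ↑x ∈ L then some ⟨act m ↑x, h⟩ else none

lemma leL_trans {S : Type*} [Semigroup S] {x y z : S} (h1 : leL x y) (h2 : leL y z) :
    leL x z := by
  rcases h1 with rfl | ⟨a, rfl⟩
  · exact h2
  · rcases h2 with rfl | ⟨b, rfl⟩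
    · exact Or.inr ⟨a, rfl⟩
    · exact Or.inr ⟨a * b, (mul_assoc a b z).symm⟩

lemma lrel_trans {S : Type*} [Semigroup S] {x y z : S} (h1 : lrel x y) (h2 : lrel y z) :
    lrel x z := ⟨leL_trans h1.1 h2.1, leL_trans h2.2 h1.2⟩

lemma leL_mul_right {S : Type*} [Semigroup S] {x y : S} (b : S) (h : leL x y) :
    leL (x * b) (y * b) := by
  rcases h with rfl | ⟨a, rfl⟩
  · exact Or.inl rfl
  · exact Or.inr ⟨a, mul_assoc a y b⟩

lemma lrel_mul_right {S : Type*} [Semigroup S] {x y : S} (b : S) (h : lrel x y) :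
    lrel (x * b) (y * b) := ⟨leL_mul_right b h.1, leL_mul_right b h.2⟩

/-- Green's lemma construction: if `z = v * a` and `v = z * b`, the principal factors of
`L_z` and `L_v` are isomorphic via right translation by `b`. -/
theorem pf_iso_aux {S : Type*} [Semigroup S] (z v a b : S)
    (hz : z = v * a) (hv : v = z * b) :
    ∃ f : Option ↥{w | lrel z w} ≃ Option ↥{w | lrel v w},
      f none = none ∧
      ∀ (s : S) (x : Option ↥{w | lrel z w}),
        f (pfAct (fun s y => s * y) {w | lrel z w} s x) =
          pfAct (fun s y => s * y) {w | lrel v w} s (f x) := by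
  have hfixz : z * b * a = z := by rw [← hv, ← hz]
  have hfixv : v * a * b = v := by rw [← hz, ← hv]
  have hfb : ∀ x : S, leL x z → x * b * a = x := by
    rintro x (rfl | ⟨c, rfl⟩)
    · exact hfixz
    · rw [mul_assoc c, mul_assoc c, hfixz]
  have hfa : ∀ y : S, leL y v → y * a * b = y := by
    rintro y (rfl | ⟨c, rfl⟩)
    · exact hfixv
    · rw [mul_assoc c, mul_assoc c, hfixv]
  have memb : ∀ w : S, w * b * a = w → (lrel z w ↔ lrel v (w * b)) := by
    intro w hw
    constructor
    · intro h; rw [hv]; exact lrel_mul_right b h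
    · intro h
      have h2 := lrel_mul_right a h
      rwa [← hz, hw] at h2
  set F : {w | lrel z w} → {w | lrel v w} := fun x =>
    ⟨x.1 * b, by rw [Set.mem_setOf_eq, hv]; exact lrel_mul_right b x.2⟩ with hF
  set G : {w | lrel v w} → {w | lrel z w} := fun y =>
    ⟨y.1 * a, by rw [Set.mem_setOf_eq, hz]; exact lrel_mul_right a y.2⟩ with hG
  refine ⟨⟨Option.map F, Option.map G, ?_, ?_⟩, rfl, ?_⟩
  · rintro (_ | x)
    · rfl
    · simp only [Option.map_some, hF, hG]
      exact congrArg some (Subtype.ext (hfb x.1 x.2.2))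
  · rintro (_ | y)
    · rfl
    · simp only [Option.map_some, hF, hG]
      exact congrArg some (Subtype.ext (hfa y.1 y.2.2))
  · rintro s (_ | x)
    · rfl
    · have hw : (s * x.1) * b * a = s * x.1 := by
        rw [mul_assoc s, mul_assoc s, hfb x.1 x.2.2]
      have hiff := memb (s * x.1) hw
      simp only [pfAct, Equiv.coe_fn_mk, Option.map_some, hF]
      by_cases h : s * x.1 ∈ {w | lrel z w}
      · rw [dif_pos h, dif_pos (show s * (x.1 * b) ∈ {w | lrel v w} by
          rw [Set.mem_setOf_eq, ← mul_assoc]; exact hiff.1 h)]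
        simp only [Option.map_some]
        exact congrArg some (Subtype.ext (mul_assoc s x.1 b))
      · rw [dif_neg h, dif_neg (fun hc => h (by
          rw [Set.mem_setOf_eq]; exact hiff.2 (by rwa [Set.mem_setOf_eq, ← mul_assoc] at hc)))]
        rfl

/-- If the `L`-classes of `u` and of `v` in a semigroup `S` lie in the same `D`-class
(i.e. `u D v`), then the principal factor left `S`-acts on `L_u ∪ {0}` and `L_v ∪ {0}`
are isomorphic: there is a bijection `f` with `f 0 = 0` and `f (s · x) = s · f x`. -/
theorem principal_factors_isomorphic_of_drel {S : Type*} [Semigroup S]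
    (u v : S) (huv : drel u v) :
    ∃ f : Option ↥{z | lrel u z} ≃ Option ↥{z | lrel v z},
      f none = none ∧
      ∀ (s : S) (x : Option ↥{z | lrel u z}),
        f (pfAct (fun s y => s * y) {z | lrel u z} s x) =
          pfAct (fun s y => s * y) {z | lrel v z} s (f x) := by
  obtain ⟨z, hL, hR⟩ := huv
  have hset : {w | lrel u w} = {w | lrel z w} := by
    ext w
    exact ⟨fun h => lrel_trans ⟨hL.2, hL.1⟩ h, fun h => lrel_trans hL h⟩
  rw [hset]
  obtain ⟨hzv, hvz⟩ := hR
  rcases hzv with rfl | ⟨a, hz⟩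
  · exact ⟨Equiv.refl _, rfl, fun s x => rfl⟩
  · rcases hvz with rfl | ⟨b, hv⟩
    · exact ⟨Equiv.refl _, rfl, fun s x => rfl⟩
    · exact pf_iso_aux z v a b hz hv
end
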